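/- Let (L₁, …, L_{k−1}, V_{G_k}; w₁, …, w_k) be a k-level vertex hierarchy on the weighted graph G = (V, w₁), and let s, t ∈ V be such that Anc(s) ∩ V_{G_k} = ∅ or Anc(t) ∩ V_{G_k} = ∅. Then dist_G(s,t) = ⨅_{x ∈ Anc(s) ∩ Anc(t)} ( d(s,x) + d(t,x) ), where the infimum in ℕ∞ over the empty set is ⊤. -/

import Mathlib

namespace ISLabel

variable {V : Type*}

/-- Two vertices are adjacent in the weighted graph `w` when they are distinct and
joined by an edge of finite weight. -/
def Adj (w : V → V → ℕ∞) (u v : V) : Prop := u ≠ v ∧ w u v < ⊤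

/-- `p` is a walk from `u` to `v` in the weighted graph `w`: a nonempty list of
vertices starting at `u`, ending at `v`, with consecutive vertices adjacent. -/
def IsWalk (w : V → V → ℕ∞) (u v : V) (p : List V) : Prop :=
  p ≠ [] ∧ p.head? = some u ∧ p.getLast? = some v ∧ p.Chain' (Adj w)

/-- The length of a list of vertices: the sum of `f` over consecutive pairs. -/
def pathLen (f : V → V → ℕ∞) (p : List V) : ℕ∞ :=
  ((p.zip p.tail).map fun e => f e.1 e.2).sum

/-- The distance from `u` to `v` in `w`: the infimum of the lengths of all walks
from `u` to `v` (`⊤` if there is no such walk). -/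
noncomputable def wdist (w : V → V → ℕ∞) (u v : V) : ℕ∞ :=
  ⨅ p : {p : List V // IsWalk w u v p}, pathLen w p.1

/-- `I` is an independent set in `w`. -/
def IsIndep (w : V → V → ℕ∞) (I : Set V) : Prop :=
  ∀ u ∈ I, ∀ v ∈ I, ¬ Adj w u v

/-- `w` is a weighted undirected graph: symmetric, and every off-diagonal value is
either `⊤` (no edge) or a weight `≥ 1`. -/
def IsWGraph (w : V → V → ℕ∞) : Prop :=
  (∀ u v, w u v = w v u) ∧ ∀ u v, u ≠ v → 1 ≤ w u v

/-- `w` is supported on `S`: all weights touching a vertex outside `S` are `⊤`. -/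
def SupportedOn (w : V → V → ℕ∞) (S : Set V) : Prop :=
  ∀ u v, u ∉ S ∨ v ∉ S → w u v = ⊤

/-- `VsetOf L i` is the vertex set `V_i = V ∖ (L₁ ∪ … ∪ L_{i-1})`. -/
def VsetOf (L : ℕ → Set V) (i : ℕ) : Set V := {v | ∀ j, 1 ≤ j → j < i → v ∉ L j}

/-- A `k`-level vertex hierarchy (`k ≥ 2`) on the weighted graph `w 1`: like a
vertex hierarchy of height `k`, except that the top vertex set
`V_{G_k} = VsetOf L k` is not required to be independent in `w k`. -/
structure KLevelHierarchy (V : Type*) (k : ℕ) where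
  L : ℕ → Set V
  w : ℕ → V → V → ℕ∞
  two_le : 2 ≤ k
  wgraph : ∀ i, 1 ≤ i → i ≤ k → IsWGraph (w i)
  disj : ∀ i j, 1 ≤ i → i < k → 1 ≤ j → j < k → i ≠ j → ∀ v, v ∈ L i → v ∉ L j
  supported : ∀ i, 1 ≤ i → i ≤ k → SupportedOn (w i) (VsetOf L i)
  aug : ∀ i, 2 ≤ i → i ≤ k → ∀ u v : V, u ≠ v → u ∈ VsetOf L i → v ∈ VsetOf L i →
    w i u v = min (w (i - 1) u v) (⨅ x ∈ L (i - 1), w (i - 1) u x + w (i - 1) x v)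
  indep : ∀ i, 1 ≤ i → i < k → IsIndep (w i) (L i)

/-- The level of a vertex: the unique `i < k` with `v ∈ L i`, and `k` for vertices
of the top vertex set `V_{G_k}`. -/
noncomputable def klevel {k : ℕ} (H : KLevelHierarchy V k) (v : V) : ℕ :=
  sInf {i | (1 ≤ i ∧ i < k ∧ v ∈ H.L i) ∨ i = k}

/-- One step of an ascending sequence in a `k`-level vertex hierarchy. -/
def kAscStep {k : ℕ} (H : KLevelHierarchy V k) (a b : V) : Prop :=
  klevel H a < klevel H b ∧ Adj (H.w (klevel H a)) a b

/-- `p` is an ascending sequence from `v` to `u`. -/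
def kIsAscending {k : ℕ} (H : KLevelHierarchy V k) (v u : V) (p : List V) : Prop :=
  p ≠ [] ∧ p.head? = some v ∧ p.getLast? = some u ∧ p.Chain' (kAscStep H)

/-- The set of ancestors of `v`. -/
def kAnc {k : ℕ} (H : KLevelHierarchy V k) (v : V) : Set V :=
  {u | ∃ p, kIsAscending H v u p}

/-- `d(v,u)` in a `k`-level vertex hierarchy. -/
noncomputable def kAncDist {k : ℕ} (H : KLevelHierarchy V k) (v u : V) : ℕ∞ :=
  ⨅ p : {p : List V // kIsAscending H v u p},
    pathLen (fun a b => H.w (klevel H a) a b) p.1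

/-! ### Auxiliary lemmas -/

section Basic

variable {f w : V → V → ℕ∞} {u v x : V} {p q : List V}

lemma exists_eq_iInf' {ι : Sort*} [Nonempty ι] (g : ι → ℕ∞) : ∃ i, g i = ⨅ j, g j := by
  obtain ⟨a, ⟨i, rfl⟩, hmin⟩ :=
    (wellFounded_lt (α := ℕ∞)).has_min (Set.range g) (Set.range_nonempty g)
  exact ⟨i, le_antisymm (le_iInf fun j => not_lt.1 (hmin _ ⟨j, rfl⟩)) (iInf_le g i)⟩

@[simp] lemma pathLen_nil : pathLen f ([] : List V) = 0 := rfl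
@[simp] lemma pathLen_singleton (a : V) : pathLen f [a] = 0 := rfl
@[simp] lemma pathLen_cons_cons (a b : V) (l : List V) :
    pathLen f (a :: b :: l) = f a b + pathLen f (b :: l) := rfl

lemma pathLen_append (q : List V) (hp : p.getLast? = some x) :
    pathLen f (p ++ q) = pathLen f p + pathLen f (x :: q) := by
  induction p with
  | nil => simp at hp
  | cons a t ih =>
    cases t with
    | nil =>
      simp only [List.getLast?_singleton, Option.some.injEq] at hp
      subst hp; simp
    | cons b t' =>
      rw [List.getLast?_cons_cons] at hp
      simp only [List.cons_append, pathLen_cons_cons]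
      rw [show (b :: t') ++ q = b :: (t' ++ q) from rfl] at *
      rw [ih hp, add_assoc]

lemma pathLen_reverse (hf : ∀ a b, f a b = f b a) (l : List V) :
    pathLen f l.reverse = pathLen f l := by
  induction l with
  | nil => simp
  | cons a t ih =>
    cases t with
    | nil => simp
    | cons b t' =>
      have h1 : (a :: b :: t').reverse = (b :: t').reverse ++ [a] := by simp
      have h2 : ((b :: t') : List V).reverse.getLast? = some b := by
        rw [List.getLast?_reverse]; rfl
      rw [h1, pathLen_append [a] h2, ih]
      simp [hf b a, add_comm]

lemma Adj.symm' (hw : ∀ a b, w a b = w b a) (h : Adj w u v) : Adj w v u :=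
  ⟨h.1.symm, (hw v u) ▸ h.2⟩

lemma IsWalk.reverse' (hw : ∀ a b, w a b = w b a) (h : IsWalk w u v p) :
    IsWalk w v u p.reverse := by
  obtain ⟨hne, hh, hl, hc⟩ := h
  refine ⟨by simpa using hne, by rw [List.head?_reverse]; exact hl,
    by rw [List.getLast?_reverse]; exact hh, ?_⟩
  show List.IsChain _ _; rw [List.isChain_reverse]
  exact List.IsChain.imp (fun a b hab => Adj.symm' hw hab) hc

lemma IsWalk.append' (h1 : IsWalk w u x p) (h2 : IsWalk w x v q) :
    IsWalk w u v (p ++ q.tail) ∧ pathLen w (p ++ q.tail) = pathLen w p + pathLen w q := by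
  obtain ⟨hne1, hh1, hl1, hc1⟩ := h1
  obtain ⟨hne2, hh2, hl2, hc2⟩ := h2
  obtain ⟨q', rfl⟩ : ∃ q', q = x :: q' := by
    cases q with
    | nil => exact absurd rfl hne2
    | cons a t =>
      simp only [List.head?_cons, Option.some.injEq] at hh2
      exact ⟨t, by rw [hh2]⟩
  cases q' with
  | nil =>
    simp only [List.tail_cons, List.append_nil]
    have hxv : x = v := by simpa using hl2
    subst hxv
    exact ⟨⟨hne1, hh1, hl1, hc1⟩, by simp⟩
  | cons c t =>
    simp only [List.tail_cons]
    constructor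
    · refine ⟨by simp [hne1], ?_, ?_, ?_⟩
      · cases p with
        | nil => exact absurd rfl hne1
        | cons a t' => simpa using hh1
      · rw [List.getLast?_append_of_ne_nil p (by simp)]
        rw [List.getLast?_cons_cons] at hl2; exact hl2
      · show List.IsChain _ _; rw [List.isChain_append]
        refine ⟨hc1, (List.isChain_cons_cons.1 hc2).2, fun a ha b hb => ?_⟩
        rw [hl1] at ha; simp at ha hb
        subst ha; subst hb
        exact (List.isChain_cons_cons.1 hc2).1
    · rw [pathLen_append (c :: t) hl1]

lemma isWalk_singleton (a : V) : IsWalk w a a [a] := ⟨by simp, rfl, rfl, List.isChain_singleton _⟩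

lemma wdist_le (h : IsWalk w u v p) : wdist w u v ≤ pathLen w p :=
  iInf_le (fun q : {p : List V // IsWalk w u v p} => pathLen w q.1) ⟨p, h⟩

lemma wdist_self_le (a : V) : wdist w a a ≤ 0 := by
  simpa using wdist_le (isWalk_singleton a)

lemma wdist_triangle (u x v : V) : wdist w u v ≤ wdist w u x + wdist w x v := by
  by_cases h1 : Nonempty {p : List V // IsWalk w u x p}
  · by_cases h2 : Nonempty {q : List V // IsWalk w x v q}
    · obtain ⟨⟨p, hp⟩, hpe⟩ := exists_eq_iInf' (fun p : {p : List V // IsWalk w u x p} => pathLen w p.1)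
      obtain ⟨⟨q, hq⟩, hqe⟩ := exists_eq_iInf' (fun q : {q : List V // IsWalk w x v q} => pathLen w q.1)
      obtain ⟨hwalk, hlen⟩ := hp.append' hq
      calc wdist w u v ≤ pathLen w (p ++ q.tail) := wdist_le hwalk
        _ = pathLen w p + pathLen w q := hlen
        _ = wdist w u x + wdist w x v := by
            simp only [wdist]; rw [← hpe, ← hqe]
    · haveI := not_nonempty_iff.1 h2
      have : wdist w x v = ⊤ := by simp only [wdist]; exact iInf_of_empty _
      rw [this, add_top]; exact le_top
  · haveI := not_nonempty_iff.1 h1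
    have : wdist w u x = ⊤ := by simp only [wdist]; exact iInf_of_empty _
    rw [this, top_add]; exact le_top

lemma wdist_symm (hw : ∀ a b, w a b = w b a) (u v : V) : wdist w u v = wdist w v u := by
  have key : ∀ a b : V, wdist w a b ≤ wdist w b a := by
    intro a b
    refine le_iInf fun ⟨p, hp⟩ => ?_
    calc wdist w a b ≤ pathLen w p.reverse := wdist_le (hp.reverse' hw)
      _ = pathLen w p := pathLen_reverse hw p
  exact le_antisymm (key u v) (key v u)

lemma wdist_le_pathLen_of_chain {R : V → V → Prop}
    (hR : ∀ a b, R a b → wdist w a b ≤ f a b) :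
    ∀ p, ∀ u v : V, p ≠ [] → p.head? = some u → p.getLast? = some v → p.Chain' R →
      wdist w u v ≤ pathLen f p := by
  intro p
  induction p with
  | nil => intro u v h; exact absurd rfl h
  | cons a t ih =>
    intro u v _ hh hl hc
    have hua : u = a := by simpa using hh.symm
    subst hua
    cases t with
    | nil =>
      have : u = v := by simpa using hl
      subst this
      simpa using wdist_self_le u
    | cons b t' =>
      rw [List.getLast?_cons_cons] at hl
      obtain ⟨hab, hc'⟩ := List.isChain_cons_cons.1 hc
      calc wdist w u v ≤ wdist w u b + wdist w b v := wdist_triangle u b v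
        _ ≤ f u b + pathLen f (b :: t') :=
            add_le_add (hR u b hab) (ih b v (by simp) rfl hl hc')
        _ = pathLen f (u :: b :: t') := rfl

end Basic

/-! ### Hierarchy lemmas -/

lemma one_le_k' {k : ℕ} (H : KLevelHierarchy V k) : 1 ≤ k := le_trans one_le_two H.two_le

section Hier

variable {k : ℕ} (H : KLevelHierarchy V k) {u v x : V} {i : ℕ}

lemma klevel_spec (v : V) :
    klevel H v = k ∨ (1 ≤ klevel H v ∧ klevel H v < k ∧ v ∈ H.L (klevel H v)) := by
  have := Nat.sInf_mem (s := {i | (1 ≤ i ∧ i < k ∧ v ∈ H.L i) ∨ i = k}) ⟨k, Or.inr rfl⟩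
  rcases this with h | h
  · exact Or.inr h
  · exact Or.inl h

lemma klevel_le_k (v : V) : klevel H v ≤ k := Nat.sInf_le (Or.inr rfl)

lemma one_le_klevel (v : V) : 1 ≤ klevel H v := by
  rcases klevel_spec H v with h | h
  · rw [h]; exact one_le_k' H
  · exact h.1

lemma klevel_le_of_mem (hi1 : 1 ≤ i) (hik : i < k) (hv : v ∈ H.L i) : klevel H v ≤ i :=
  Nat.sInf_le (Or.inl ⟨hi1, hik, hv⟩)

lemma klevel_eq_of_mem (hi1 : 1 ≤ i) (hik : i < k) (hv : v ∈ H.L i) : klevel H v = i := by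
  refine le_antisymm (klevel_le_of_mem H hi1 hik hv) ?_
  by_contra h
  push_neg at h
  rcases klevel_spec H v with heq | ⟨h1, h2, h3⟩
  · omega
  · exact H.disj i (klevel H v) hi1 hik h1 h2 (by omega) v hv h3

lemma mem_VsetOf_iff (hik : i ≤ k) : v ∈ VsetOf H.L i ↔ i ≤ klevel H v := by
  constructor
  · intro hv
    by_contra h
    push_neg at h
    rcases klevel_spec H v with heq | ⟨h1, h2, h3⟩
    · omega
    · exact hv (klevel H v) h1 h h3
  · intro h j hj1 hji hvj
    have hjk : j < k := by omega
    have := klevel_eq_of_mem H hj1 hjk hvj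
    omega

lemma mem_VsetOf_of_lt_top (hi1 : 1 ≤ i) (hik : i ≤ k) (h : H.w i u v < ⊤) :
    u ∈ VsetOf H.L i ∧ v ∈ VsetOf H.L i := by
  constructor
  · by_contra hu
    exact absurd (H.supported i hi1 hik u v (Or.inl hu)) h.ne
  · by_contra hv
    exact absurd (H.supported i hi1 hik u v (Or.inr hv)) h.ne

lemma mem_VsetOf_succ (hv : v ∈ VsetOf H.L i) (h : v ∉ H.L i) :
    v ∈ VsetOf H.L (i + 1) := by
  intro j hj1 hji
  rcases Nat.lt_succ_iff_lt_or_eq.1 hji with hj | rfl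
  · exact hv j hj1 hj
  · exact h

lemma w_succ_le_w (hi1 : 1 ≤ i) (hik : i < k) (huv : u ≠ v)
    (hu : u ∈ VsetOf H.L (i + 1)) (hv : v ∈ VsetOf H.L (i + 1)) :
    H.w (i + 1) u v ≤ H.w i u v := by
  rw [H.aug (i + 1) (by omega) (by omega) u v huv hu hv]
  simpa using min_le_left _ _

lemma w_succ_le_add (hi1 : 1 ≤ i) (hik : i < k) (huv : u ≠ v)
    (hu : u ∈ VsetOf H.L (i + 1)) (hv : v ∈ VsetOf H.L (i + 1)) (hx : x ∈ H.L i) :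
    H.w (i + 1) u v ≤ H.w i u x + H.w i x v := by
  rw [H.aug (i + 1) (by omega) (by omega) u v huv hu hv]
  simp only [Nat.add_sub_cancel]
  exact le_trans (min_le_right _ _) (iInf₂_le x hx)

end Hier

/-! ### Ancestor lemmas -/

section Anc

variable {k : ℕ} (H : KLevelHierarchy V k) {u u' v x : V} {i : ℕ}

lemma kIsAscending_singleton (v : V) : kIsAscending H v v [v] :=
  ⟨by simp, rfl, rfl, List.isChain_singleton _⟩

lemma kAnc_self (v : V) : v ∈ kAnc H v := ⟨[v], kIsAscending_singleton H v⟩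

lemma kAncDist_le {p : List V} (h : kIsAscending H v u p) :
    kAncDist H v u ≤ pathLen (fun a b => H.w (klevel H a) a b) p :=
  iInf_le (fun q : {p : List V // kIsAscending H v u p} =>
    pathLen (fun a b => H.w (klevel H a) a b) q.1) ⟨p, h⟩

lemma kAncDist_self_le (v : V) : kAncDist H v v ≤ 0 := by
  simpa using kAncDist_le H (kIsAscending_singleton H v)

lemma kAsc_cons {r : List V} (hstep : kAscStep H u u') (h : kIsAscending H u' x r) :
    kIsAscending H u x (u :: r) ∧
      pathLen (fun a b => H.w (klevel H a) a b) (u :: r) =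
        H.w (klevel H u) u u' + pathLen (fun a b => H.w (klevel H a) a b) r := by
  obtain ⟨hne, hh, hl, hc⟩ := h
  obtain ⟨r', rfl⟩ : ∃ r', r = u' :: r' := by
    cases r with
    | nil => exact absurd rfl hne
    | cons a t =>
      simp only [List.head?_cons, Option.some.injEq] at hh
      exact ⟨t, by rw [hh]⟩
  refine ⟨⟨by simp, rfl, by rw [List.getLast?_cons_cons]; exact hl,
    List.isChain_cons_cons.2 ⟨hstep, hc⟩⟩, rfl⟩

lemma kAnc_step (hstep : kAscStep H u u') : u' ∈ kAnc H u :=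
  ⟨[u, u'], (kAsc_cons H hstep (kIsAscending_singleton H u')).1⟩

lemma kAnc_step_trans (hstep : kAscStep H u u') (hx : x ∈ kAnc H u') : x ∈ kAnc H u := by
  obtain ⟨r, hr⟩ := hx
  exact ⟨u :: r, (kAsc_cons H hstep hr).1⟩

lemma kAncDist_step_le (hstep : kAscStep H u u') (hx : x ∈ kAnc H u') :
    kAncDist H u x ≤ H.w (klevel H u) u u' + kAncDist H u' x := by
  have : Nonempty {p : List V // kIsAscending H u' x p} := ⟨⟨hx.choose, hx.choose_spec⟩⟩
  obtain ⟨⟨r, hr⟩, hre⟩ := exists_eq_iInf'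
    (fun p : {p : List V // kIsAscending H u' x p} =>
      pathLen (fun a b => H.w (klevel H a) a b) p.1)
  obtain ⟨hasc, hlen⟩ := kAsc_cons H hstep hr
  calc kAncDist H u x ≤ _ := kAncDist_le H hasc
    _ = H.w (klevel H u) u u' + pathLen (fun a b => H.w (klevel H a) a b) r := hlen
    _ = H.w (klevel H u) u u' + kAncDist H u' x := by
        simp only [kAncDist]; rw [← hre]

end Anc

/-! ### Main lemmas -/

section MainLemmas

variable {k : ℕ} (H : KLevelHierarchy V k)

lemma IsWalk.head_cons {w : V → V → ℕ∞} {u v : V} {p : List V}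
    (h : IsWalk w u v p) : ∃ t, p = u :: t := by
  obtain ⟨hne, hh, -, -⟩ := h
  cases p with
  | nil => exact absurd rfl hne
  | cons a t =>
    simp only [List.head?_cons, Option.some.injEq] at hh
    exact ⟨t, by rw [hh]⟩

lemma w_symm (i : ℕ) (hi1 : 1 ≤ i) (hik : i ≤ k) (a b : V) : H.w i a b = H.w i b a :=
  (H.wgraph i hi1 hik).1 a b

lemma wdist_one_le_w : ∀ i, 1 ≤ i → i ≤ k → ∀ u v : V, wdist (H.w 1) u v ≤ H.w i u v := by
  intro i
  induction i with
  | zero => omega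
  | succ n ih =>
    intro h1 hik u v
    by_cases huv : u = v
    · subst huv; exact le_trans (wdist_self_le u) zero_le
    rcases Nat.eq_zero_or_pos n with rfl | hn
    · -- base case i = 1
      by_cases htop : H.w 1 u v = ⊤
      · rw [htop]; exact le_top
      · have hadj : Adj (H.w 1) u v := ⟨huv, lt_top_iff_ne_top.2 htop⟩
        have hwalk : IsWalk (H.w 1) u v [u, v] :=
          ⟨by simp, rfl, rfl, List.isChain_cons_cons.2 ⟨hadj, by simp⟩⟩
        simpa using wdist_le hwalk
    · -- step case
      have hnk : n ≤ k := by omega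
      by_cases hu : u ∈ VsetOf H.L (n + 1)
      · by_cases hv : v ∈ VsetOf H.L (n + 1)
        · rw [H.aug (n + 1) (by omega) hik u v huv hu hv]
          simp only [Nat.add_sub_cancel]
          refine le_min (ih hn hnk u v) (le_iInf fun x => le_iInf fun hx => ?_)
          exact le_trans (wdist_triangle u x v) (add_le_add (ih hn hnk u x) (ih hn hnk x v))
        · rw [H.supported (n + 1) h1 hik u v (Or.inr hv)]; exact le_top
      · rw [H.supported (n + 1) h1 hik u v (Or.inl hu)]; exact le_top

lemma walk_ends_mem (i : ℕ) (hi1 : 1 ≤ i) (hik : i ≤ k) {u v : V} {p : List V}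
    (h : IsWalk (H.w i) u v p) (hne : u ≠ v) :
    u ∈ VsetOf H.L i ∧ v ∈ VsetOf H.L i := by
  have half : ∀ u v : V, ∀ p, IsWalk (H.w i) u v p → u ≠ v → u ∈ VsetOf H.L i := by
    intro u v p hw hne
    obtain ⟨t, rfl⟩ := hw.head_cons
    obtain ⟨-, -, hl, hc⟩ := hw
    cases t with
    | nil =>
      have : u = v := by simpa using hl
      exact absurd this hne
    | cons b t' =>
      have hadj : Adj (H.w i) u b := (List.isChain_cons_cons.1 hc).1
      exact (mem_VsetOf_of_lt_top H hi1 hik hadj.2).1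
  exact ⟨half u v p h hne,
    half v u p.reverse (h.reverse' (w_symm H i hi1 hik)) hne.symm⟩

lemma lift_walk (i : ℕ) (hi1 : 1 ≤ i) (hik : i < k) :
    ∀ n (p : List V) (u v : V), p.length ≤ n → IsWalk (H.w i) u v p →
      u ∈ VsetOf H.L (i + 1) → v ∈ VsetOf H.L (i + 1) →
      ∃ p', IsWalk (H.w (i + 1)) u v p' ∧
        pathLen (H.w (i + 1)) p' ≤ pathLen (H.w i) p := by
  intro n
  induction n with
  | zero =>
    intro p u v hlen hw
    exact absurd (List.eq_nil_of_length_eq_zero (Nat.le_zero.1 hlen)) hw.1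
  | succ n ih =>
    intro p u v hlen hw hu hv
    obtain ⟨t, rfl⟩ := hw.head_cons
    obtain ⟨-, -, hl, hc⟩ := hw
    cases t with
    | nil =>
      have huv : u = v := by simpa using hl
      subst huv
      exact ⟨[u], isWalk_singleton u, by simp⟩
    | cons b t' =>
      rw [List.getLast?_cons_cons] at hl
      have hadj : Adj (H.w i) u b := (List.isChain_cons_cons.1 hc).1
      have hbVi : b ∈ VsetOf H.L i :=
        (mem_VsetOf_of_lt_top H hi1 (le_of_lt hik) hadj.2).2
      have hwalk_t : IsWalk (H.w i) b v (b :: t') :=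
        ⟨by simp, rfl, hl, (List.isChain_cons_cons.1 hc).2⟩
      by_cases hbL : b ∈ H.L i
      · cases t' with
        | nil =>
          have hbv : b = v := by simpa using hl
          subst hbv
          exact absurd hbL (hv i hi1 (by omega))
        | cons c t'' =>
          rw [List.getLast?_cons_cons] at hl
          have hadj2 : Adj (H.w i) b c := (List.isChain_cons_cons.1 (List.isChain_cons_cons.1 hc).2).1
          have hcL : c ∉ H.L i := fun hcL => H.indep i hi1 hik b hbL c hcL hadj2
          have hcVi : c ∈ VsetOf H.L i :=
            (mem_VsetOf_of_lt_top H hi1 (le_of_lt hik) hadj2.2).2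
          have hcV : c ∈ VsetOf H.L (i + 1) := mem_VsetOf_succ H hcVi hcL
          have hwalk_c : IsWalk (H.w i) c v (c :: t'') :=
            ⟨by simp, rfl, hl, (List.isChain_cons_cons.1 (List.isChain_cons_cons.1 hc).2).2⟩
          have hlen'' : (c :: t'').length ≤ n := by simp at hlen ⊢; omega
          by_cases huc : u = c
          · subst huc
            obtain ⟨p', hp', hplen⟩ := ih (u :: t'') u v hlen'' hwalk_c hu hv
            refine ⟨p', hp', le_trans hplen ?_⟩
            calc pathLen (H.w i) (u :: t'')
                ≤ H.w i b u + pathLen (H.w i) (u :: t'') := le_add_self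
              _ ≤ H.w i u b + (H.w i b u + pathLen (H.w i) (u :: t'')) := le_add_self
              _ = pathLen (H.w i) (u :: b :: u :: t'') := by rw [pathLen_cons_cons,
                    pathLen_cons_cons]
          · obtain ⟨p', hp', hplen⟩ := ih (c :: t'') c v hlen'' hwalk_c hcV hv
            have hwle : H.w (i + 1) u c ≤ H.w i u b + H.w i b c :=
              w_succ_le_add H hi1 hik huc hu hcV hbL
            have hlt : H.w (i + 1) u c < ⊤ :=
              lt_of_le_of_lt hwle (WithTop.add_lt_top.2 ⟨hadj.2, hadj2.2⟩)
            obtain ⟨rest, rfl⟩ := hp'.head_cons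
            obtain ⟨-, -, hpl', hpc'⟩ := hp'
            refine ⟨u :: c :: rest, ⟨by simp, rfl, by
              rw [List.getLast?_cons_cons]; exact hpl',
              List.isChain_cons_cons.2 ⟨⟨huc, hlt⟩, hpc'⟩⟩, ?_⟩
            calc pathLen (H.w (i + 1)) (u :: c :: rest)
                = H.w (i + 1) u c + pathLen (H.w (i + 1)) (c :: rest) := rfl
              _ ≤ (H.w i u b + H.w i b c) + pathLen (H.w i) (c :: t'') :=
                  add_le_add hwle hplen
              _ = pathLen (H.w i) (u :: b :: c :: t'') := by
                  rw [pathLen_cons_cons, pathLen_cons_cons, add_assoc]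
      · have hbV : b ∈ VsetOf H.L (i + 1) := mem_VsetOf_succ H hbVi hbL
        have hlen'' : (b :: t').length ≤ n := by simp at hlen ⊢; omega
        obtain ⟨p', hp', hplen⟩ := ih (b :: t') b v hlen'' hwalk_t hbV hv
        have hwle : H.w (i + 1) u b ≤ H.w i u b := w_succ_le_w H hi1 hik hadj.1 hu hbV
        have hlt : H.w (i + 1) u b < ⊤ := lt_of_le_of_lt hwle hadj.2
        obtain ⟨rest, rfl⟩ := hp'.head_cons
        obtain ⟨-, -, hpl', hpc'⟩ := hp'
        refine ⟨u :: b :: rest, ⟨by simp, rfl, by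
          rw [List.getLast?_cons_cons]; exact hpl',
          List.isChain_cons_cons.2 ⟨⟨hadj.1, hlt⟩, hpc'⟩⟩, ?_⟩
        calc pathLen (H.w (i + 1)) (u :: b :: rest)
            = H.w (i + 1) u b + pathLen (H.w (i + 1)) (b :: rest) := rfl
          _ ≤ H.w i u b + pathLen (H.w i) (b :: t') := add_le_add hwle hplen
          _ = pathLen (H.w i) (u :: b :: t') := rfl

lemma main_base : ∀ (p : List V) (u v : V), IsWalk (H.w k) u v p →
    ((∀ x ∈ kAnc H u, x ∉ VsetOf H.L k) ∨ (∀ x ∈ kAnc H v, x ∉ VsetOf H.L k)) →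
    ∃ x, x ∈ kAnc H u ∧ x ∈ kAnc H v ∧
      kAncDist H u x + kAncDist H v x ≤ pathLen (H.w k) p := by
  intro p u v hw hcond
  by_cases huv : u = v
  · subst huv
    refine ⟨u, kAnc_self H u, kAnc_self H u, ?_⟩
    have h0 : kAncDist H u u + kAncDist H u u ≤ 0 := by
      simpa using add_le_add (kAncDist_self_le H u) (kAncDist_self_le H u)
    exact le_trans h0 zero_le
  · exfalso
    obtain ⟨hu, hv⟩ := walk_ends_mem H k (one_le_k' H) le_rfl hw huv
    rcases hcond with h | h
    · exact h u (kAnc_self H u) hu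
    · exact h v (kAnc_self H v) hv

lemma main_aux :
    ∀ n i, 1 ≤ i → i ≤ k → k - i ≤ n →
    ∀ m (p : List V) (u v : V), p.length ≤ m → IsWalk (H.w i) u v p →
      ((∀ x ∈ kAnc H u, x ∉ VsetOf H.L k) ∨ (∀ x ∈ kAnc H v, x ∉ VsetOf H.L k)) →
      ∃ x, x ∈ kAnc H u ∧ x ∈ kAnc H v ∧
        kAncDist H u x + kAncDist H v x ≤ pathLen (H.w i) p := by
  intro n
  induction n with
  | zero =>
    intro i hi1 hik hn m p u v hm hw hcond
    have : i = k := by omega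
    subst this
    exact main_base H p u v hw hcond
  | succ n ihn =>
    intro i hi1 hik hn
    by_cases hikk : i = k
    · subst hikk
      intro m p u v hm hw hcond
      exact main_base H p u v hw hcond
    have hik' : i < k := lt_of_le_of_ne hik hikk
    intro m
    induction m with
    | zero =>
      intro p u v hm hw _
      exact absurd (List.eq_nil_of_length_eq_zero (Nat.le_zero.1 hm)) hw.1
    | succ m ihm =>
      intro p u v hm hw hcond
      by_cases huv : u = v
      · subst huv
        refine ⟨u, kAnc_self H u, kAnc_self H u, ?_⟩
        have h0 : kAncDist H u u + kAncDist H u u ≤ 0 := by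
          simpa using add_le_add (kAncDist_self_le H u) (kAncDist_self_le H u)
        exact le_trans h0 zero_le
      obtain ⟨hu_i, hv_i⟩ := walk_ends_mem H i hi1 (le_of_lt hik') hw huv
      by_cases huL : u ∈ H.L i
      · -- strip the front vertex, which lies in `L i`
        obtain ⟨t0, rfl⟩ := hw.head_cons
        obtain ⟨-, -, hl, hc⟩ := hw
        cases t0 with
        | nil => exact absurd (by simpa using hl) huv
        | cons b t' =>
          rw [List.getLast?_cons_cons] at hl
          have hadj : Adj (H.w i) u b := (List.isChain_cons_cons.1 hc).1
          have hwalk_t : IsWalk (H.w i) b v (b :: t') :=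
            ⟨by simp, rfl, hl, (List.isChain_cons_cons.1 hc).2⟩
          have hbL : b ∉ H.L i := fun hbL => H.indep i hi1 hik' u huL b hbL hadj
          have hbVi : b ∈ VsetOf H.L i :=
            (mem_VsetOf_of_lt_top H hi1 (le_of_lt hik') hadj.2).2
          have hbV1 : b ∈ VsetOf H.L (i + 1) := mem_VsetOf_succ H hbVi hbL
          have hlvu : klevel H u = i := klevel_eq_of_mem H hi1 hik' huL
          have hlvb : i + 1 ≤ klevel H b := (mem_VsetOf_iff H (by omega)).1 hbV1
          have hstep : kAscStep H u b :=
            ⟨by rw [hlvu]; omega, by rw [hlvu]; exact hadj⟩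
          by_cases hbv : b = v
          · subst hbv
            refine ⟨b, kAnc_step H hstep, kAnc_self H b, ?_⟩
            have h1 : kAncDist H u b ≤ H.w (klevel H u) u b + kAncDist H b b :=
              kAncDist_step_le H hstep (kAnc_self H b)
            calc kAncDist H u b + kAncDist H b b
                ≤ (H.w (klevel H u) u b + kAncDist H b b) + kAncDist H b b :=
                  add_le_add_left h1 _
              _ ≤ (H.w i u b + 0) + 0 := by
                  rw [hlvu]
                  exact add_le_add (add_le_add_right (kAncDist_self_le H b) _)
                    (kAncDist_self_le H b)
              _ ≤ H.w i u b + pathLen (H.w i) (b :: t') := by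
                  simpa using le_self_add
              _ = pathLen (H.w i) (u :: b :: t') := rfl
          · have hcond' : (∀ x ∈ kAnc H b, x ∉ VsetOf H.L k) ∨
                (∀ x ∈ kAnc H v, x ∉ VsetOf H.L k) := by
              rcases hcond with h | h
              · exact Or.inl fun x hx => h x (kAnc_step_trans H hstep hx)
              · exact Or.inr h
            obtain ⟨x, hxb, hxv, hbound⟩ := ihm (b :: t') b v
              (by simp at hm ⊢; omega) hwalk_t hcond'
            refine ⟨x, kAnc_step_trans H hstep hxb, hxv, ?_⟩
            calc kAncDist H u x + kAncDist H v x
                ≤ (H.w (klevel H u) u b + kAncDist H b x) + kAncDist H v x :=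
                  add_le_add_left (kAncDist_step_le H hstep hxb) _
              _ = H.w i u b + (kAncDist H b x + kAncDist H v x) := by
                  rw [hlvu, add_assoc]
              _ ≤ H.w i u b + pathLen (H.w i) (b :: t') := add_le_add_right hbound _
              _ = pathLen (H.w i) (u :: b :: t') := rfl
      by_cases hvL : v ∈ H.L i
      · -- strip the back vertex, by reversing the walk
        have hsym := w_symm H i hi1 (le_of_lt hik')
        have hplen_rev := pathLen_reverse hsym p
        have hwrev : IsWalk (H.w i) v u p.reverse := hw.reverse' hsym
        have hrevlen : p.reverse.length ≤ m + 1 := by simpa using hm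
        obtain ⟨t0, hpr⟩ := hwrev.head_cons
        rw [hpr] at hwrev hplen_rev hrevlen
        obtain ⟨-, -, hl, hc⟩ := hwrev
        cases t0 with
        | nil =>
          exact absurd (show v = u by simpa using hl) (Ne.symm huv)
        | cons c t' =>
          rw [List.getLast?_cons_cons] at hl
          have hadj : Adj (H.w i) v c := (List.isChain_cons_cons.1 hc).1
          have hwalk_t : IsWalk (H.w i) c u (c :: t') :=
            ⟨by simp, rfl, hl, (List.isChain_cons_cons.1 hc).2⟩
          have hcL : c ∉ H.L i := fun hcL => H.indep i hi1 hik' v hvL c hcL hadj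
          have hcVi : c ∈ VsetOf H.L i :=
            (mem_VsetOf_of_lt_top H hi1 (le_of_lt hik') hadj.2).2
          have hcV1 : c ∈ VsetOf H.L (i + 1) := mem_VsetOf_succ H hcVi hcL
          have hlvv : klevel H v = i := klevel_eq_of_mem H hi1 hik' hvL
          have hlvc : i + 1 ≤ klevel H c := (mem_VsetOf_iff H (by omega)).1 hcV1
          have hstep : kAscStep H v c :=
            ⟨by rw [hlvv]; omega, by rw [hlvv]; exact hadj⟩
          by_cases hcu : c = u
          · subst hcu
            refine ⟨c, kAnc_self H c, kAnc_step H hstep, ?_⟩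
            have h1 : kAncDist H v c ≤ H.w (klevel H v) v c + kAncDist H c c :=
              kAncDist_step_le H hstep (kAnc_self H c)
            rw [← hplen_rev]
            calc kAncDist H c c + kAncDist H v c
                ≤ kAncDist H c c + (H.w (klevel H v) v c + kAncDist H c c) :=
                  add_le_add_right h1 _
              _ ≤ 0 + (H.w i v c + 0) := by
                  rw [hlvv]
                  exact add_le_add (kAncDist_self_le H c)
                    (add_le_add_right (kAncDist_self_le H c) _)
              _ ≤ H.w i v c + pathLen (H.w i) (c :: t') := by
                  simpa using le_self_add
              _ = pathLen (H.w i) (v :: c :: t') := rfl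
          · have hcond' : (∀ x ∈ kAnc H u, x ∉ VsetOf H.L k) ∨
                (∀ x ∈ kAnc H c, x ∉ VsetOf H.L k) := by
              rcases hcond with h | h
              · exact Or.inl h
              · exact Or.inr fun x hx => h x (kAnc_step_trans H hstep hx)
            have hlen' : (c :: t').length ≤ m := by
              have : (v :: c :: t').length ≤ m + 1 := hrevlen
              simp at this ⊢; omega
            obtain ⟨x, hxc, hxu, hbound⟩ := ihm (c :: t') c u hlen' hwalk_t hcond'.symm
            refine ⟨x, hxu, kAnc_step_trans H hstep hxc, ?_⟩
            rw [← hplen_rev]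
            calc kAncDist H u x + kAncDist H v x
                ≤ kAncDist H u x + (H.w (klevel H v) v c + kAncDist H c x) :=
                  add_le_add_right (kAncDist_step_le H hstep hxc) _
              _ = H.w i v c + (kAncDist H c x + kAncDist H u x) := by
                  rw [hlvv, ← add_assoc, add_comm (kAncDist H u x), add_assoc,
                    add_comm (kAncDist H u x)]
              _ ≤ H.w i v c + pathLen (H.w i) (c :: t') := add_le_add_right hbound _
              _ = pathLen (H.w i) (v :: c :: t') := rfl
      · -- both endpoints survive to level `i + 1`: lift the walk
        have huV : u ∈ VsetOf H.L (i + 1) := mem_VsetOf_succ H hu_i huL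
        have hvV : v ∈ VsetOf H.L (i + 1) := mem_VsetOf_succ H hv_i hvL
        obtain ⟨p', hp', hplen⟩ := lift_walk H i hi1 hik' p.length p u v le_rfl hw huV hvV
        obtain ⟨x, hxu, hxv, hbound⟩ := ihn (i + 1) (by omega) (by omega) (by omega)
          p'.length p' u v le_rfl hp' hcond
        exact ⟨x, hxu, hxv, le_trans hbound (le_trans hplen le_rfl)⟩

lemma wdist_le_kAncDist (s x : V) : wdist (H.w 1) s x ≤ kAncDist H s x := by
  refine le_iInf fun ⟨p, hp⟩ => ?_
  exact wdist_le_pathLen_of_chain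
    (fun a b _ => wdist_one_le_w H (klevel H a) (one_le_klevel H a) (klevel_le_k H a) a b)
    p s x hp.1 hp.2.1 hp.2.2.1 hp.2.2.2

end MainLemmas

/-- Type-1 queries in a `k`-level vertex hierarchy are answered by
the labels alone. -/
theorem klevel_type1_query [Fintype V] {k : ℕ} (H : KLevelHierarchy V k)
    (s t : V)
    (hdisj : kAnc H s ∩ VsetOf H.L k = ∅ ∨ kAnc H t ∩ VsetOf H.L k = ∅) :
    wdist (H.w 1) s t =
      ⨅ x ∈ kAnc H s ∩ kAnc H t, (kAncDist H s x + kAncDist H t x) := by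
  have hsym1 : ∀ a b : V, H.w 1 a b = H.w 1 b a := w_symm H 1 le_rfl (one_le_k' H)
  refine le_antisymm (le_iInf fun x => le_iInf fun hx => ?_) ?_
  · have h1 := wdist_triangle (w := H.w 1) s x t
    rw [wdist_symm hsym1 x t] at h1
    exact le_trans h1
      (add_le_add (wdist_le_kAncDist H s x) (wdist_le_kAncDist H t x))
  · simp only [wdist]
    refine le_iInf fun ⟨p, hp⟩ => ?_
    have hcond : (∀ x ∈ kAnc H s, x ∉ VsetOf H.L k) ∨
        (∀ x ∈ kAnc H t, x ∉ VsetOf H.L k) := by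
      rcases hdisj with h | h
      · exact Or.inl fun x hx hxk => Set.eq_empty_iff_forall_notMem.1 h x ⟨hx, hxk⟩
      · exact Or.inr fun x hx hxk => Set.eq_empty_iff_forall_notMem.1 h x ⟨hx, hxk⟩
    obtain ⟨x, hxs, hxt, hbound⟩ := main_aux H k 1 le_rfl (one_le_k' H) (by omega)
      p.length p s t le_rfl hp hcond
    exact le_trans (iInf₂_le x ⟨hxs, hxt⟩) hbound

end ISLabel
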